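/- Let I be a countable set and P ⊆ (I → ℝ≥0) satisfying the PCS conditions: (i) P is downward closed for the pointwise order; (ii) P is closed under binary convex combinations; (iii) P is ω-complete (the pointwise supremum of every pointwise-nondecreasing sequence of elements of P again lies in P); (iv) for every a ∈ I there exist ε > 0 with ε·δ_a ∈ P and m ∈ ℝ≥0 with x(a) ≤ m for all x ∈ P. Let x ∈ P, let W = {a ∈ I | there exists ε > 0 with x + ε·δ_a ∈ P}, and let P_x = {u : I → ℝ≥0 | u(a) = 0 for all a ∉ W, and x + u ∈ P}. Then P_x satisfies the PCS conditions relative to the index set W: it is downward closed, closed under binary convex combinations, ω-complete, and for every a ∈ W there exist ε > 0 with ε·δ_a ∈ P_x and m ∈ ℝ≥0 with u(a) ≤ m for all u ∈ P_x. -/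

import Mathlib

open scoped NNReal

lemma nnreal_add_ciSup (c : ℝ≥0) (f : ℕ → ℝ≥0) (hf : BddAbove (Set.range f)) :
    c + ⨆ n, f n = ⨆ n, c + f n := by
  have hf' : BddAbove (Set.range fun n => c + f n) := by
    obtain ⟨m, hm⟩ := hf
    exact ⟨c + m, by rintro y ⟨n, rfl⟩; exact add_le_add_right (hm ⟨n, rfl⟩) c⟩
  rw [← ENNReal.coe_inj, ENNReal.coe_add, ENNReal.coe_iSup hf, ENNReal.coe_iSup hf',
    ENNReal.add_iSup]
  simp [ENNReal.coe_add]

/-- Local PCS: if `P ⊆ (I → ℝ≥0)` satisfies the PCS conditions and `x ∈ P`, then the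
local set `P_x` (supported on the web `W` of directions in which one can move from `x`
while staying in `P`) satisfies the PCS conditions relative to the index set `W`. -/
theorem stmt5 {I : Type*} [Countable I] [DecidableEq I] (P : Set (I → ℝ≥0))
    (hdown : ∀ x ∈ P, ∀ y : I → ℝ≥0, y ≤ x → y ∈ P)
    (hconv : ∀ x ∈ P, ∀ y ∈ P, ∀ t : ℝ≥0, t ≤ 1 →
      (fun a => t * x a + (1 - t) * y a) ∈ P)
    (homega : ∀ u : ℕ → (I → ℝ≥0), (∀ n, u n ∈ P) → Monotone u →
      (fun a => ⨆ n, u n a) ∈ P)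
    (hdelta : ∀ a : I, ∃ ε : ℝ≥0, 0 < ε ∧
      (fun b => if b = a then ε else 0) ∈ P)
    (hbdd : ∀ a : I, ∃ m : ℝ≥0, ∀ x ∈ P, x a ≤ m)
    (x : I → ℝ≥0) (hx : x ∈ P)
    (W : Set I)
    (hW : W = {a : I | ∃ ε : ℝ≥0, 0 < ε ∧
      (fun b => x b + (if b = a then ε else 0)) ∈ P})
    (Px : Set (I → ℝ≥0))
    (hPx : Px = {u : I → ℝ≥0 | (∀ a ∉ W, u a = 0) ∧ (fun a => x a + u a) ∈ P}) :
    (∀ u ∈ Px, ∀ v : I → ℝ≥0, v ≤ u → v ∈ Px) ∧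
    (∀ u ∈ Px, ∀ v ∈ Px, ∀ t : ℝ≥0, t ≤ 1 →
      (fun a => t * u a + (1 - t) * v a) ∈ Px) ∧
    (∀ s : ℕ → (I → ℝ≥0), (∀ n, s n ∈ Px) → Monotone s →
      (fun a => ⨆ n, s n a) ∈ Px) ∧
    (∀ a ∈ W, ∃ ε : ℝ≥0, 0 < ε ∧ (fun b => if b = a then ε else 0) ∈ Px) ∧
    (∀ a ∈ W, ∃ m : ℝ≥0, ∀ u ∈ Px, u a ≤ m) := by
  subst hPx
  refine ⟨?_, ?_, ?_, ?_, ?_⟩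
  · rintro u ⟨hu0, huP⟩ v hvu
    refine ⟨fun a ha => le_antisymm ((hvu a).trans_eq (hu0 a ha)) zero_le, ?_⟩
    exact hdown _ huP _ fun a => add_le_add_right (hvu a) (x a)
  · rintro u ⟨hu0, huP⟩ v ⟨hv0, hvP⟩ t ht
    refine ⟨fun a ha => by simp [hu0 a ha, hv0 a ha], ?_⟩
    have := hconv _ huP _ hvP t ht
    convert this using 1
    funext a
    have h1 : t + (1 - t) = 1 := by
      rw [add_tsub_cancel_of_le ht]
    have hxa : t * x a + (1 - t) * x a = x a := by rw [← add_mul, h1, one_mul]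
    calc x a + (t * u a + (1 - t) * v a)
        = (t * x a + (1 - t) * x a) + (t * u a + (1 - t) * v a) := by rw [hxa]
      _ = t * (x a + u a) + (1 - t) * (x a + v a) := by ring
  · rintro s hs hmono
    refine ⟨fun a ha => ?_, ?_⟩
    · have : ∀ n, s n a = 0 := fun n => (hs n).1 a ha
      simp [this]
    · have key := homega (fun n => fun a => x a + s n a) (fun n => (hs n).2)
        (fun n m hnm a => add_le_add_right (hmono hnm a) (x a))
      convert key using 1
      funext a
      have hbA : BddAbove (Set.range fun n => s n a) := by
        obtain ⟨m, hm⟩ := hbdd a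
        refine ⟨m, ?_⟩
        rintro y ⟨n, rfl⟩
        exact le_trans (le_add_self) (hm _ ((hs n).2))
      exact nnreal_add_ciSup (x a) (fun n => s n a) hbA
  · intro a ha
    rw [hW] at ha
    obtain ⟨ε, hε, hεP⟩ := ha
    refine ⟨ε, hε, fun b hb => ?_, hεP⟩
    have : b ≠ a := fun h => hb (h ▸ (hW ▸ Set.mem_setOf.mpr ⟨ε, hε, hεP⟩ : a ∈ W))
    simp [this]
  · intro a _
    obtain ⟨m, hm⟩ := hbdd a
    exact ⟨m, fun u hu => le_trans (le_add_self) (hm _ hu.2)⟩
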